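/- For x, y in the unit ball of ℝⁿ with x ≠ 0 and y ≠ x, the angle Ξ(x,y) = π − ∠Oxy (where ∠Oxy is the hyperbolic angle at x in the geodesic triangle with vertices O, x, y in the Poincaré ball) satisfies cos(Ξ(x,y)) = (⟨x,y⟩(1+‖x‖²) − ‖x‖²(1+‖y‖²)) / (‖x‖·‖x−y‖·√(1+‖x‖²‖y‖²−2⟨x,y⟩)). -/
import Mathlib


open scoped RealInnerProductSpace

noncomputable def arcosh (x : ℝ) : ℝ := Real.log (x + Real.sqrt (x ^ 2 - 1))

noncomputable def poincareDist {n : ℕ} (x y : EuclideanSpace ℝ (Fin n)) : ℝ :=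
  arcosh (1 + 2 * ‖x - y‖ ^ 2 / ((1 - ‖x‖ ^ 2) * (1 - ‖y‖ ^ 2)))

/-- cos of the hyperbolic angle ∠Oxy at x in the triangle O, x, y, via the
hyperbolic law of cosines. -/
noncomputable def cosAngleOxy {n : ℕ} (x y : EuclideanSpace ℝ (Fin n)) : ℝ :=
  (-Real.cosh (poincareDist 0 y) +
      Real.cosh (poincareDist 0 x) * Real.cosh (poincareDist x y)) /
    (Real.sinh (poincareDist 0 x) * Real.sinh (poincareDist x y))

lemma exp_arcosh {t : ℝ} (ht : 1 ≤ t) : Real.exp (arcosh t) = t + Real.sqrt (t ^ 2 - 1) := by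
  have hs : 0 ≤ Real.sqrt (t ^ 2 - 1) := Real.sqrt_nonneg _
  exact Real.exp_log (by nlinarith)

lemma exp_neg_arcosh {t : ℝ} (ht : 1 ≤ t) :
    Real.exp (-arcosh t) = t - Real.sqrt (t ^ 2 - 1) := by
  have hs : Real.sqrt (t ^ 2 - 1) ^ 2 = t ^ 2 - 1 := Real.sq_sqrt (by nlinarith)
  have hs0 : 0 ≤ Real.sqrt (t ^ 2 - 1) := Real.sqrt_nonneg _
  have hpos : 0 < t + Real.sqrt (t ^ 2 - 1) := by nlinarith
  rw [Real.exp_neg, exp_arcosh ht]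
  rw [inv_eq_one_div, div_eq_iff hpos.ne']
  nlinarith

lemma cosh_arcosh {t : ℝ} (ht : 1 ≤ t) : Real.cosh (arcosh t) = t := by
  rw [Real.cosh_eq, exp_arcosh ht, exp_neg_arcosh ht]; ring

lemma sinh_arcosh {t : ℝ} (ht : 1 ≤ t) :
    Real.sinh (arcosh t) = Real.sqrt (t ^ 2 - 1) := by
  rw [Real.sinh_eq, exp_arcosh ht, exp_neg_arcosh ht]; ring

theorem cos_Xi_formula {n : ℕ} (x y : EuclideanSpace ℝ (Fin n))
    (hx1 : ‖x‖ < 1) (hy1 : ‖y‖ < 1) (hx0 : x ≠ 0) (hxy : y ≠ x) :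
    -cosAngleOxy x y =
      (⟪x, y⟫ * (1 + ‖x‖ ^ 2) - ‖x‖ ^ 2 * (1 + ‖y‖ ^ 2)) /
        (‖x‖ * ‖x - y‖ * Real.sqrt (1 + ‖x‖ ^ 2 * ‖y‖ ^ 2 - 2 * ⟪x, y⟫)) := by
  set a := ‖x‖ with ha'
  set b := ‖y‖ with hb'
  set q := ‖x - y‖ with hq'
  set p := ⟪x, y⟫ with hp'
  have ha : 0 < a := norm_pos_iff.mpr hx0
  have hb0 : 0 ≤ b := norm_nonneg _
  have hq : 0 < q := norm_pos_iff.mpr (sub_ne_zero.mpr (Ne.symm hxy))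
  have h1a : (0:ℝ) < 1 - a ^ 2 := by nlinarith
  have h1b : (0:ℝ) < 1 - b ^ 2 := by nlinarith
  have hc : q ^ 2 = a ^ 2 + b ^ 2 - 2 * p := by
    have := @norm_sub_sq_real (EuclideanSpace ℝ (Fin n)) _ _ x y
    rw [hq', ha', hb', hp']; linarith
  have hpab : p ≤ a * b := real_inner_le_norm x y
  have hab1 : a * b < 1 := by nlinarith
  have hS : (0:ℝ) < 1 + a ^ 2 * b ^ 2 - 2 * p := by nlinarith
  set S := Real.sqrt (1 + a ^ 2 * b ^ 2 - 2 * p) with hS'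
  have hSpos : 0 < S := Real.sqrt_pos.mpr hS
  have hS2 : S ^ 2 = 1 + a ^ 2 * b ^ 2 - 2 * p := Real.sq_sqrt hS.le
  -- the three arcosh arguments
  have hn0x : ‖(0:EuclideanSpace ℝ (Fin n)) - x‖ = a := by rw [zero_sub, norm_neg]
  have hn0y : ‖(0:EuclideanSpace ℝ (Fin n)) - y‖ = b := by rw [zero_sub, norm_neg]
  have hn0 : ‖(0:EuclideanSpace ℝ (Fin n))‖ = 0 := norm_zero
  have ht1 : (1:ℝ) ≤ 1 + 2 * a ^ 2 / ((1 - 0 ^ 2) * (1 - a ^ 2)) := by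
    have : 0 ≤ 2 * a ^ 2 / ((1 - 0 ^ 2) * (1 - a ^ 2)) := by positivity
    linarith
  have ht2 : (1:ℝ) ≤ 1 + 2 * b ^ 2 / ((1 - 0 ^ 2) * (1 - b ^ 2)) := by
    have : 0 ≤ 2 * b ^ 2 / ((1 - 0 ^ 2) * (1 - b ^ 2)) := by positivity
    linarith
  have ht3 : (1:ℝ) ≤ 1 + 2 * q ^ 2 / ((1 - a ^ 2) * (1 - b ^ 2)) := by
    have : 0 ≤ 2 * q ^ 2 / ((1 - a ^ 2) * (1 - b ^ 2)) := by positivity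
    linarith
  have e1 : Real.cosh (poincareDist 0 x) = 1 + 2 * a ^ 2 / ((1 - 0 ^ 2) * (1 - a ^ 2)) := by
    rw [poincareDist, hn0x, hn0, cosh_arcosh ht1]
  have e2 : Real.cosh (poincareDist 0 y) = 1 + 2 * b ^ 2 / ((1 - 0 ^ 2) * (1 - b ^ 2)) := by
    rw [poincareDist, hn0y, hn0, cosh_arcosh ht2]
  have e3 : Real.cosh (poincareDist x y) = 1 + 2 * q ^ 2 / ((1 - a ^ 2) * (1 - b ^ 2)) := by
    rw [poincareDist, cosh_arcosh ht3]
  have s1 : Real.sinh (poincareDist 0 x) = 2 * a / (1 - a ^ 2) := by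
    rw [poincareDist, hn0x, hn0, sinh_arcosh ht1]
    rw [show (1 + 2 * a ^ 2 / ((1 - 0 ^ 2) * (1 - a ^ 2))) ^ 2 - 1
        = (2 * a / (1 - a ^ 2)) ^ 2 by field_simp; ring]
    exact Real.sqrt_sq (by positivity)
  have s3 : Real.sinh (poincareDist x y) = 2 * q / ((1 - a ^ 2) * (1 - b ^ 2)) * S := by
    rw [poincareDist, sinh_arcosh ht3]
    rw [show (1 + 2 * q ^ 2 / ((1 - a ^ 2) * (1 - b ^ 2))) ^ 2 - 1
        = (2 * q / ((1 - a ^ 2) * (1 - b ^ 2))) ^ 2 * (1 + a ^ 2 * b ^ 2 - 2 * p) by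
      field_simp; linear_combination (4*q^2) * hc]
    rw [Real.sqrt_mul (by positivity), Real.sqrt_sq (by positivity), ← hS']
  have key : cosAngleOxy x y = (a ^ 2 * (1 + b ^ 2) - p * (1 + a ^ 2)) / (a * q * S) := by
    rw [cosAngleOxy, e1, e2, e3, s1, s3, hc]
    rw [div_eq_div_iff (by positivity) (by positivity)]
    field_simp
    ring
  rw [key, ← neg_div]
  ring_nf
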